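/- Let n ≥ 5 and δ ∈ ℂ with δ ∉ {0, 1, 2}. If [-,-] is a Lie bracket on μ₀ⁿ making (μ₀ⁿ, ·, [-,-]) a transposed δ-Poisson algebra, then there exist α_{n−2}, α_{n−1}, αₙ ∈ ℂ such that [e₁,e₂] = α_{n−2} e_{n−2} + α_{n−1} e_{n−1} + αₙ eₙ, [e₁,e₃] = δ(α_{n−2} e_{n−1} + α_{n−1} eₙ), [e₂,e₃] = ((δ²−δ)/2) α_{n−2} eₙ, [e₁,e₄] = ((δ²+δ)/2) α_{n−2} eₙ, and [eᵢ,eⱼ] = 0 for all other pairs 1 ≤ i < j ≤ n; that is, the structure is TP_δ(α_{n−2}, α_{n−1}, αₙ). -/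
import Mathlib


open Finset

/-- The null-filiform associative multiplication on `ℂⁿ = Fin n → ℂ`.
The basis vector `e_i` (1-based) corresponds to the coordinate `i - 1`, and
`e_i · e_j = e_{i+j}` if `i + j ≤ n`, and `0` otherwise. -/
noncomputable def nfMul (n : ℕ) (x y : Fin n → ℂ) : Fin n → ℂ :=
  fun k => ∑ i : Fin n, ∑ j : Fin n,
    if (i : ℕ) + (j : ℕ) + 1 = (k : ℕ) then x i * y j else 0

/-- The 1-based basis vector `e i` of `ℂⁿ` (zero if `i` is out of range `1,…,n`). -/
noncomputable def nfE (n : ℕ) (i : ℕ) : Fin n → ℂ :=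
  fun k => if (k : ℕ) + 1 = i then 1 else 0

/-- The coefficient of the basis vector `e i` (1-based) in `x`. -/
noncomputable def nfCoeff (n : ℕ) (x : Fin n → ℂ) (i : ℕ) : ℂ :=
  ∑ k : Fin n, if (k : ℕ) + 1 = i then x k else 0

/-- A Lie bracket (bilinear, alternating, satisfying the Jacobi identity)
on a complex vector space. -/
structure LieBracketOn (L : Type*) [AddCommGroup L] [Module ℂ L] where
  br : L → L → L
  add_left : ∀ x y z, br (x + y) z = br x z + br y z
  smul_left : ∀ (c : ℂ) (x y : L), br (c • x) y = c • br x y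
  add_right : ∀ x y z, br x (y + z) = br x y + br x z
  smul_right : ∀ (c : ℂ) (x y : L), br x (c • y) = c • br x y
  alt : ∀ x, br x x = 0
  jacobi : ∀ x y z, br (br x y) z + br (br y z) x + br (br z x) y = 0

/-- `(μ₀ⁿ, ·, [-,-])` is a transposed `δ`-Poisson algebra:
`δ • (z · [x,y]) = [z·x, y] + [x, z·y]`. -/
noncomputable def IsTransposedPoisson (n : ℕ) (δ : ℂ) (B : LieBracketOn (Fin n → ℂ)) : Prop :=
  ∀ x y z, δ • nfMul n z (B.br x y) = B.br (nfMul n z x) y + B.br x (nfMul n z y)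

/-- `(μ₀ⁿ, ·, [-,-])` is a `δ`-Poisson algebra:
`[x, y·z] = δ • ([x,y]·z + y·[x,z])`. -/
noncomputable def IsDeltaPoisson (n : ℕ) (δ : ℂ) (B : LieBracketOn (Fin n → ℂ)) : Prop :=
  ∀ x y z, B.br x (nfMul n y z) = δ • (nfMul n (B.br x y) z + nfMul n y (B.br x z))

/-- The bracket of the transposed 0-Poisson algebra `TP₀(α₁,…,αₙ)` on `μ₀ⁿ`:
determined by `[e₁,e₂] = ∑_{t=1}^n αₜ eₜ` and `[eᵢ,eⱼ] = 0` for all other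
pairs `i < j`. -/
noncomputable def brTP0 (n : ℕ) (α : ℕ → ℂ) (x y : Fin n → ℂ) : Fin n → ℂ :=
  (nfCoeff n x 1 * nfCoeff n y 2 - nfCoeff n x 2 * nfCoeff n y 1) •
    ∑ t ∈ Finset.Icc 1 n, α t • nfE n t

/-- The bracket of the transposed 1-Poisson algebra `TP₁(α₂,…,αₙ)` on `μ₀ⁿ`:
determined by `[e₁,eᵢ] = ∑_{t=i}^n α_{t-i+2} eₜ` for `2 ≤ i ≤ n` and
`[eᵢ,eⱼ] = 0` for `2 ≤ i < j ≤ n`. -/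
noncomputable def brTP1 (n : ℕ) (α : ℕ → ℂ) (x y : Fin n → ℂ) : Fin n → ℂ :=
  ∑ i ∈ Finset.Icc 2 n,
    (nfCoeff n x 1 * nfCoeff n y i - nfCoeff n x i * nfCoeff n y 1) •
      ∑ t ∈ Finset.Icc i n, α (t + 2 - i) • nfE n t

/-- The bracket of the transposed `δ`-Poisson algebra `TP_δ(a, b, c)`
(`a = α_{n-2}`, `b = α_{n-1}`, `c = αₙ`) on `μ₀ⁿ`: determined by
`[e₁,e₂] = a e_{n-2} + b e_{n-1} + c eₙ`, `[e₁,e₃] = δ(a e_{n-1} + b eₙ)`,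
`[e₂,e₃] = ((δ²-δ)/2) a eₙ`, `[e₁,e₄] = ((δ²+δ)/2) a eₙ`, and `[eᵢ,eⱼ] = 0`
for all other pairs `i < j`. -/
noncomputable def brTPd (n : ℕ) (δ a b c : ℂ) (x y : Fin n → ℂ) : Fin n → ℂ :=
  (nfCoeff n x 1 * nfCoeff n y 2 - nfCoeff n x 2 * nfCoeff n y 1) •
      (a • nfE n (n-2) + b • nfE n (n-1) + c • nfE n n)
  + (nfCoeff n x 1 * nfCoeff n y 3 - nfCoeff n x 3 * nfCoeff n y 1) •
      (δ • (a • nfE n (n-1) + b • nfE n n))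
  + (nfCoeff n x 2 * nfCoeff n y 3 - nfCoeff n x 3 * nfCoeff n y 2) •
      (((δ^2 - δ)/2 * a) • nfE n n)
  + (nfCoeff n x 1 * nfCoeff n y 4 - nfCoeff n x 4 * nfCoeff n y 1) •
      (((δ^2 + δ)/2 * a) • nfE n n)

/-- Two bracket structures on `μ₀ⁿ` are isomorphic (as transposed δ-Poisson
algebras): there is a linear bijection preserving both `·` and `[-,-]`. -/
noncomputable def TPIso (n : ℕ) (B B' : (Fin n → ℂ) → (Fin n → ℂ) → (Fin n → ℂ)) : Prop :=
  ∃ φ : (Fin n → ℂ) ≃ₗ[ℂ] (Fin n → ℂ),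
    (∀ x y, φ (nfMul n x y) = nfMul n (φ x) (φ y)) ∧
    ∀ x y, φ (B x y) = B' (φ x) (φ y)

lemma nfMul_zero_right (n : ℕ) (z : Fin n → ℂ) : nfMul n z 0 = 0 := by
  funext k; simp [nfMul]

lemma nfMul_smul_right (n : ℕ) (z : Fin n → ℂ) (c : ℂ) (x : Fin n → ℂ) :
    nfMul n z (c • x) = c • nfMul n z x := by
  funext k
  simp only [nfMul, Pi.smul_apply, smul_eq_mul, Finset.mul_sum]
  refine Finset.sum_congr rfl fun i _ => Finset.sum_congr rfl fun j _ => ?_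
  split_ifs <;> ring

lemma nfMul_add_right (n : ℕ) (z x y : Fin n → ℂ) :
    nfMul n z (x + y) = nfMul n z x + nfMul n z y := by
  funext k
  simp only [nfMul, Pi.add_apply, ← Finset.sum_add_distrib]
  refine Finset.sum_congr rfl fun i _ => Finset.sum_congr rfl fun j _ => ?_
  split_ifs <;> ring

lemma nfE_of_gt (n i : ℕ) (h : n < i) : nfE n i = 0 := by
  funext k
  simp only [nfE, Pi.zero_apply]
  rw [if_neg (by omega)]

lemma shift_apply (n a : ℕ) (ha : 1 ≤ a) (x : Fin n → ℂ) (k : Fin n) :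
    nfMul n (nfE n a) x k = if h : a ≤ (k : ℕ) then x ⟨(k : ℕ) - a, by omega⟩ else 0 := by
  simp only [nfMul, nfE]
  by_cases h : a ≤ (k : ℕ)
  · rw [dif_pos h]
    have han : a - 1 < n := by omega
    rw [Finset.sum_eq_single (⟨a - 1, han⟩ : Fin n)]
    · rw [Finset.sum_eq_single (⟨(k : ℕ) - a, by omega⟩ : Fin n)]
      · simp only [Fin.val_mk]
        rw [if_pos (by omega), if_pos (by omega : (a:ℕ) - 1 + 1 = a)]
        ring
      · intro j _ hj
        have hj' : (j : ℕ) ≠ (k : ℕ) - a := fun hh => hj (Fin.ext hh)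
        simp only [Fin.val_mk]
        rw [if_neg (by omega)]
      · intro h'; exact absurd (Finset.mem_univ _) h'
    · intro i _ hi
      apply Finset.sum_eq_zero
      intro j _
      have hi' : (i : ℕ) ≠ a - 1 := fun hh => hi (Fin.ext hh)
      split_ifs with h1 h2
      · exact absurd h2 (by omega)
      · ring
      · rfl
    · intro h'; exact absurd (Finset.mem_univ _) h'
  · rw [dif_neg h]
    apply Finset.sum_eq_zero; intro i _
    apply Finset.sum_eq_zero; intro j _
    split_ifs with h1 h2
    · exact absurd h1 (by omega)
    · ring
    · rfl

lemma mul_e (n a b : ℕ) (ha : 1 ≤ a) (hb : 1 ≤ b) :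
    nfMul n (nfE n a) (nfE n b) = nfE n (a + b) := by
  funext k
  rw [shift_apply n a ha]
  simp only [nfE, Fin.val_mk]
  split_ifs with h1 h2 h3 <;> first | rfl | omega

lemma shift_shift (n p q : ℕ) (hp : 1 ≤ p) (hq : 1 ≤ q) (x : Fin n → ℂ) :
    nfMul n (nfE n p) (nfMul n (nfE n q) x) = nfMul n (nfE n (p + q)) x := by
  funext k
  simp only [shift_apply n p hp, shift_apply n q hq,
    shift_apply n (p + q) (show 1 ≤ p + q by omega), Fin.val_mk]
  split_ifs with h1 h2 h3 h3 h4 <;> first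
  | rfl
  | (exact (congrArg x (Fin.ext (by simp; omega))))
  | omega

lemma halve {M : Type*} [AddCommGroup M] [Module ℂ M] {x z : M} (h : x + x = z) :
    x = ((1:ℂ)/2) • z := by
  rw [← h, ← two_smul ℂ x, smul_smul]; norm_num

lemma halve0 {M : Type*} [AddCommGroup M] [Module ℂ M] {x : M} (h : x + x = 0) : x = 0 := by
  rw [halve h, smul_zero]

lemma br_anti {L : Type*} [AddCommGroup L] [Module ℂ L] (B : LieBracketOn L) (x y : L) :
    B.br x y = - B.br y x := by
  have h := B.alt (x + y)
  rw [B.add_left, B.add_right, B.add_right, B.alt, B.alt] at h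
  simp only [zero_add, add_zero] at h
  exact eq_neg_of_add_eq_zero_left h

lemma br_rel (n : ℕ) (δ : ℂ) (B : LieBracketOn (Fin n → ℂ)) (hB : IsTransposedPoisson n δ B)
    (i j k : ℕ) (hi : 1 ≤ i) (hj : 1 ≤ j) (hk : 1 ≤ k) :
    δ • nfMul n (nfE n k) (B.br (nfE n i) (nfE n j))
      = B.br (nfE n (i + k)) (nfE n j) + B.br (nfE n i) (nfE n (j + k)) := by
  have h := hB (nfE n i) (nfE n j) (nfE n k)
  rwa [mul_e n k i hk hi, mul_e n k j hk hj, Nat.add_comm k i, Nat.add_comm k j] at h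

/-- for `n ≥ 5` and `δ ∉ {0,1,2}`, any transposed `δ`-Poisson
structure on `μ₀ⁿ` is of the form `TP_δ(α_{n-2}, α_{n-1}, αₙ)`. -/
theorem stmt_17 (n : ℕ) (hn : 5 ≤ n) (δ : ℂ)
    (hδ0 : δ ≠ 0) (hδ1 : δ ≠ 1) (hδ2 : δ ≠ 2)
    (B : LieBracketOn (Fin n → ℂ)) (hB : IsTransposedPoisson n δ B) :
    ∃ a b c : ℂ,
      B.br (nfE n 1) (nfE n 2) =
        a • nfE n (n-2) + b • nfE n (n-1) + c • nfE n n ∧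
      B.br (nfE n 1) (nfE n 3) = δ • (a • nfE n (n-1) + b • nfE n n) ∧
      B.br (nfE n 2) (nfE n 3) = ((δ^2 - δ)/2 * a) • nfE n n ∧
      B.br (nfE n 1) (nfE n 4) = ((δ^2 + δ)/2 * a) • nfE n n ∧
      ∀ i j, 1 ≤ i → i < j → j ≤ n →
        ¬((i = 1 ∧ j = 2) ∨ (i = 1 ∧ j = 3) ∨ (i = 2 ∧ j = 3) ∨
          (i = 1 ∧ j = 4)) →
        B.br (nfE n i) (nfE n j) = 0 := by
  have hδδ1 : δ - 1 ≠ 0 := sub_ne_zero.mpr hδ1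
  have hδδ2 : δ - 2 ≠ 0 := sub_ne_zero.mpr hδ2
  -- [e₁,e₃] = δ • S₁[e₁,e₂]
  have r121 := br_rel n δ B hB 1 2 1 (by omega) (by omega) (by omega)
  simp only [Nat.reduceAdd] at r121
  rw [B.alt, zero_add] at r121
  have h13 : B.br (nfE n 1) (nfE n 3)
      = δ • nfMul n (nfE n 1) (B.br (nfE n 1) (nfE n 2)) := r121.symm
  -- relation from (1,3,1)
  have r131 := br_rel n δ B hB 1 3 1 (by omega) (by omega) (by omega)
  simp only [Nat.reduceAdd] at r131
  rw [h13, nfMul_smul_right, shift_shift n 1 1 (by omega) (by omega), smul_smul] at r131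
  simp only [Nat.reduceAdd] at r131
  -- relation from (1,2,2)
  have r122 := br_rel n δ B hB 1 2 2 (by omega) (by omega) (by omega)
  simp only [Nat.reduceAdd] at r122
  rw [br_anti B (nfE n 3) (nfE n 2)] at r122
  -- [e₂,e₃] and [e₁,e₄]
  have h23 : B.br (nfE n 2) (nfE n 3)
      = ((δ^2 - δ)/2) • nfMul n (nfE n 2) (B.br (nfE n 1) (nfE n 2)) := by
    have e1 : B.br (nfE n 2) (nfE n 3) + B.br (nfE n 2) (nfE n 3)
        = (δ * δ) • nfMul n (nfE n 2) (B.br (nfE n 1) (nfE n 2))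
          - δ • nfMul n (nfE n 2) (B.br (nfE n 1) (nfE n 2)) := by
      rw [r131, r122]; abel
    rw [halve e1, smul_sub, smul_smul, smul_smul, ← sub_smul]
    ring_nf
  have h14 : B.br (nfE n 1) (nfE n 4)
      = ((δ^2 + δ)/2) • nfMul n (nfE n 2) (B.br (nfE n 1) (nfE n 2)) := by
    have e2 : B.br (nfE n 1) (nfE n 4) + B.br (nfE n 1) (nfE n 4)
        = (δ * δ) • nfMul n (nfE n 2) (B.br (nfE n 1) (nfE n 2))
          + δ • nfMul n (nfE n 2) (B.br (nfE n 1) (nfE n 2)) := by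
      rw [r131, r122]; abel
    rw [halve e2, smul_add, smul_smul, smul_smul, ← add_smul]
    ring_nf
  -- [e₂,e₄]
  have r231 := br_rel n δ B hB 2 3 1 (by omega) (by omega) (by omega)
  simp only [Nat.reduceAdd] at r231
  rw [B.alt, zero_add, h23, nfMul_smul_right, shift_shift n 1 2 (by omega) (by omega),
    smul_smul] at r231
  simp only [Nat.reduceAdd] at r231
  have h24 : B.br (nfE n 2) (nfE n 4)
      = (δ * ((δ^2 - δ)/2)) • nfMul n (nfE n 3) (B.br (nfE n 1) (nfE n 2)) := r231.symm
  -- relation from (1,4,1)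
  have r141 := br_rel n δ B hB 1 4 1 (by omega) (by omega) (by omega)
  simp only [Nat.reduceAdd] at r141
  rw [h14, nfMul_smul_right, shift_shift n 1 2 (by omega) (by omega), smul_smul] at r141
  simp only [Nat.reduceAdd] at r141
  -- relation from (1,2,3)
  have r123 := br_rel n δ B hB 1 2 3 (by omega) (by omega) (by omega)
  simp only [Nat.reduceAdd] at r123
  rw [br_anti B (nfE n 4) (nfE n 2)] at r123
  -- S₃[e₁,e₂] = 0
  have e3 : (δ * ((δ^2 + δ)/2)) • nfMul n (nfE n 3) (B.br (nfE n 1) (nfE n 2))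
      - δ • nfMul n (nfE n 3) (B.br (nfE n 1) (nfE n 2))
      = B.br (nfE n 2) (nfE n 4) + B.br (nfE n 2) (nfE n 4) := by
    rw [r141, r123]; abel
  rw [h24] at e3
  have key : ((-δ^3 + 3*δ^2 - 2*δ)/2)
      • nfMul n (nfE n 3) (B.br (nfE n 1) (nfE n 2)) = 0 := by
    have hsc : ((-δ^3 + 3*δ^2 - 2*δ)/2)
        = (δ * ((δ^2 + δ)/2)) - δ - (δ * ((δ^2 - δ)/2)) - (δ * ((δ^2 - δ)/2)) := by ring
    rw [hsc, sub_smul, sub_smul, sub_smul, e3]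
    abel
  have hcoef : ((-δ^3 + 3*δ^2 - 2*δ)/2 : ℂ) ≠ 0 := by
    have hfac : ((-δ^3 + 3*δ^2 - 2*δ)/2 : ℂ) = -(δ * (δ - 1) * (δ - 2))/2 := by ring
    rw [hfac]
    exact div_ne_zero (neg_ne_zero.mpr (mul_ne_zero (mul_ne_zero hδ0 hδδ1) hδδ2)) two_ne_zero
  have hw3 : nfMul n (nfE n 3) (B.br (nfE n 1) (nfE n 2)) = 0 :=
    (smul_eq_zero.mp key).resolve_left hcoef
  have h24' : B.br (nfE n 2) (nfE n 4) = 0 := by rw [h24, hw3, smul_zero]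
  have h15 : B.br (nfE n 1) (nfE n 5) = 0 := by
    rw [hw3, smul_zero, h24', neg_zero, zero_add] at r123
    exact r123.symm
  have hw4 : nfMul n (nfE n 4) (B.br (nfE n 1) (nfE n 2)) = 0 := by
    show nfMul n (nfE n (1 + 3)) (B.br (nfE n 1) (nfE n 2)) = 0
    rw [← shift_shift n 1 3 (by omega) (by omega), hw3, nfMul_zero_right]
  -- level 7
  have r151 := br_rel n δ B hB 1 5 1 (by omega) (by omega) (by omega)
  simp only [Nat.reduceAdd] at r151
  rw [h15, nfMul_zero_right, smul_zero] at r151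
  have r241 := br_rel n δ B hB 2 4 1 (by omega) (by omega) (by omega)
  simp only [Nat.reduceAdd] at r241
  rw [h24', nfMul_zero_right, smul_zero] at r241
  have r232 := br_rel n δ B hB 2 3 2 (by omega) (by omega) (by omega)
  simp only [Nat.reduceAdd] at r232
  rw [h23, nfMul_smul_right, shift_shift n 2 2 (by omega) (by omega)] at r232
  simp only [Nat.reduceAdd] at r232
  rw [hw4, smul_zero, smul_zero, br_anti B (nfE n 4) (nfE n 3)] at r232
  have h25 : B.br (nfE n 2) (nfE n 5) = 0 := by
    apply halve0
    calc B.br (nfE n 2) (nfE n 5) + B.br (nfE n 2) (nfE n 5)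
        = (B.br (nfE n 3) (nfE n 4) + B.br (nfE n 2) (nfE n 5))
          + (-B.br (nfE n 3) (nfE n 4) + B.br (nfE n 2) (nfE n 5)) := by abel
      _ = 0 := by rw [← r241, ← r232, add_zero]
  have h34 : B.br (nfE n 3) (nfE n 4) = 0 := by
    have h' := r241.symm
    rw [h25, add_zero] at h'
    exact h'
  have h16 : B.br (nfE n 1) (nfE n 6) = 0 := by
    have h' := r151.symm
    rw [h25, zero_add] at h'
    exact h'
  -- all brackets of total degree ≥ 6 vanish
  have level : ∀ m : ℕ, 6 ≤ m → ∀ i j : ℕ, 1 ≤ i → 1 ≤ j → i + j = m →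
      B.br (nfE n i) (nfE n j) = 0 := by
    intro m
    induction m using Nat.strong_induction_on with
    | _ m IH =>
    intro hm i j hi hj hij
    by_cases hm6 : m = 6
    · subst hm6
      have hi5 : i ≤ 5 := by omega
      interval_cases i
      · rw [show j = 5 by omega]; exact h15
      · rw [show j = 4 by omega]; exact h24'
      · rw [show j = 3 by omega]; exact B.alt _
      · rw [show j = 2 by omega, br_anti, h24', neg_zero]
      · rw [show j = 1 by omega, br_anti, h15, neg_zero]
    by_cases hm7 : m = 7
    · subst hm7
      have hi6 : i ≤ 6 := by omega
      interval_cases i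
      · rw [show j = 6 by omega]; exact h16
      · rw [show j = 5 by omega]; exact h25
      · rw [show j = 4 by omega]; exact h34
      · rw [show j = 3 by omega, br_anti, h34, neg_zero]
      · rw [show j = 2 by omega, br_anti, h25, neg_zero]
      · rw [show j = 1 by omega, br_anti, h16, neg_zero]
    have hm8 : 8 ≤ m := by omega
    have IH1 : ∀ a b : ℕ, 1 ≤ a → 1 ≤ b → a + b = m - 1 →
        B.br (nfE n a) (nfE n b) = 0 := fun a b ha hb hab =>
      IH (m-1) (by omega) (by omega) a b ha hb hab
    have IH2 : ∀ a b : ℕ, 1 ≤ a → 1 ≤ b → a + b = m - 2 →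
        B.br (nfE n a) (nfE n b) = 0 := fun a b ha hb hab =>
      IH (m-2) (by omega) (by omega) a b ha hb hab
    have rec1 : ∀ t s : ℕ, 1 ≤ t → 1 ≤ s → t + s = m - 1 →
        B.br (nfE n (t+1)) (nfE n s) = - B.br (nfE n t) (nfE n (s+1)) := by
      intro t s ht hs hts
      have r := br_rel n δ B hB t s 1 ht hs (by omega)
      rw [IH1 t s ht hs hts, nfMul_zero_right, smul_zero] at r
      exact eq_neg_of_add_eq_zero_left r.symm
    have rec2 : ∀ t s : ℕ, 1 ≤ t → 1 ≤ s → t + s = m - 2 →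
        B.br (nfE n (t+2)) (nfE n s) = - B.br (nfE n t) (nfE n (s+2)) := by
      intro t s ht hs hts
      have r := br_rel n δ B hB t s 2 ht hs (by omega)
      rw [IH2 t s ht hs hts, nfMul_zero_right, smul_zero] at r
      exact eq_neg_of_add_eq_zero_left r.symm
    have c1 : B.br (nfE n 1) (nfE n (m-1)) = 0 := by
      have a2 := rec1 1 (m-2) (by omega) (by omega) (by omega)
      simp only [Nat.reduceAdd] at a2
      rw [show m-2+1 = m-1 by omega] at a2
      have a3 := rec1 2 (m-3) (by omega) (by omega) (by omega)
      simp only [Nat.reduceAdd] at a3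
      rw [show m-3+1 = m-2 by omega] at a3
      have b3 := rec2 1 (m-3) (by omega) (by omega) (by omega)
      simp only [Nat.reduceAdd] at b3
      rw [show m-3+2 = m-1 by omega] at b3
      have hx : B.br (nfE n 1) (nfE n (m-1)) = - B.br (nfE n 1) (nfE n (m-1)) := by
        rw [← b3, a3, a2, neg_neg]
      apply halve0
      nth_rewrite 1 [hx]
      simp
    have main : ∀ t : ℕ, 1 ≤ t → t ≤ m - 1 → B.br (nfE n t) (nfE n (m - t)) = 0 := by
      intro t ht
      induction t, ht using Nat.le_induction with
      | base => intro _; exact c1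
      | succ t ht IHt =>
        intro htm
        have r := rec1 t (m-t-1) ht (by omega) (by omega)
        rw [show m-t-1+1 = m-t by omega] at r
        rw [show m-(t+1) = m-t-1 by omega]
        rw [r, IHt (by omega), neg_zero]
    rw [show j = m - i by omega]
    exact main i hi (by omega)
  -- the coefficients
  have hv0 : ∀ k : Fin n, (k:ℕ) + 3 < n → B.br (nfE n 1) (nfE n 2) k = 0 := by
    intro k hk
    have h0 := congrFun hw3 (⟨(k:ℕ)+3, by omega⟩ : Fin n)
    rw [shift_apply n 3 (by omega)] at h0
    simp only [Fin.val_mk] at h0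
    rw [dif_pos (by omega : 3 ≤ (k:ℕ)+3)] at h0
    simp only [Nat.add_sub_cancel, Fin.eta, Pi.zero_apply] at h0
    exact h0
  set av := B.br (nfE n 1) (nfE n 2) ⟨n-3, by omega⟩ with hav
  set bv := B.br (nfE n 1) (nfE n 2) ⟨n-2, by omega⟩ with hbv
  set cv := B.br (nfE n 1) (nfE n 2) ⟨n-1, by omega⟩ with hcv
  have hvexp : B.br (nfE n 1) (nfE n 2)
      = av • nfE n (n-2) + bv • nfE n (n-1) + cv • nfE n n := by
    funext k
    simp only [Pi.add_apply, Pi.smul_apply, nfE, smul_eq_mul]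
    by_cases h1 : (k:ℕ) + 1 = n - 2
    · rw [if_pos h1, if_neg (show ¬((k:ℕ) + 1 = n - 1) by omega),
        if_neg (show ¬((k:ℕ) + 1 = n) by omega), mul_one, mul_zero, mul_zero,
        add_zero, add_zero, hav]
      exact congrArg _ (Fin.ext (by simp only [Fin.val_mk]; omega))
    by_cases h2 : (k:ℕ) + 1 = n - 1
    · rw [if_neg h1, if_pos h2, if_neg (show ¬((k:ℕ) + 1 = n) by omega),
        mul_zero, mul_one, mul_zero, zero_add, add_zero, hbv]
      exact congrArg _ (Fin.ext (by simp only [Fin.val_mk]; omega))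
    by_cases h3 : (k:ℕ) + 1 = n
    · rw [if_neg h1, if_neg h2, if_pos h3, mul_zero, mul_zero, mul_one,
        zero_add, zero_add, hcv]
      exact congrArg _ (Fin.ext (by simp only [Fin.val_mk]; omega))
    · rw [if_neg h1, if_neg h2, if_neg h3, mul_zero, mul_zero, mul_zero,
        add_zero, add_zero]
      exact hv0 k (by omega)
  have hw1 : nfMul n (nfE n 1) (B.br (nfE n 1) (nfE n 2))
      = av • nfE n (n-1) + bv • nfE n n := by
    rw [hvexp, nfMul_add_right, nfMul_add_right, nfMul_smul_right, nfMul_smul_right,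
      nfMul_smul_right, mul_e n 1 (n-2) (by omega) (by omega),
      mul_e n 1 (n-1) (by omega) (by omega), mul_e n 1 n (by omega) (by omega),
      show 1 + (n-2) = n-1 by omega, show 1 + (n-1) = n by omega,
      nfE_of_gt n (1+n) (by omega), smul_zero, add_zero]
  have hw2 : nfMul n (nfE n 2) (B.br (nfE n 1) (nfE n 2)) = av • nfE n n := by
    rw [hvexp, nfMul_add_right, nfMul_add_right, nfMul_smul_right, nfMul_smul_right,
      nfMul_smul_right, mul_e n 2 (n-2) (by omega) (by omega),
      mul_e n 2 (n-1) (by omega) (by omega), mul_e n 2 n (by omega) (by omega),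
      show 2 + (n-2) = n by omega, nfE_of_gt n (2+(n-1)) (by omega),
      nfE_of_gt n (2+n) (by omega), smul_zero, smul_zero, add_zero, add_zero]
  refine ⟨av, bv, cv, hvexp, ?_, ?_, ?_, ?_⟩
  · rw [h13, hw1]
  · rw [h23, hw2, smul_smul]
  · rw [h14, hw2, smul_smul]
  · intro i j hi hij hjn hnot
    have hj : 1 ≤ j := by omega
    have h6 : 6 ≤ i + j := by omega
    exact level (i + j) h6 i j hi hj rfl
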